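/- arXiv:2409.13578 — 3 statements merged into one kernel-verified Lean document; each statement's English description precedes it below -/
import Mathlib

section
/- For the Hamiltonian H(I,θ) = Σ_i ω_i I_i − (K_1/N) Σ_{i,j} A_{ij} √(I_i I_j)(I_j − I_i) sin(θ_j − θ_i) − (K_2/N²) Σ_{i,j,k} B_{ijk} (I_i I_j I_k)^{1/3}(I_j + I_k − 2I_i) sin(θ_j + θ_k − 2θ_i), every torus T_c = {(I,θ) : I_i = c for all i} with c > 0 is invariant under the Hamiltonian flow: if I_i = c for all i, then ∂H/∂θ_i = 0 for every i. -/
/-- Every torus `T_c` (`c > 0`) is invariant under the Hamiltonian flow of the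
higher-order Hamiltonian: on `I ≡ c`, the partial derivative `∂H/∂θ_i` vanishes for all `i`. -/
theorem torus_invariant_higher_order
    (N : ℕ) (hN : 1 ≤ N) (ω : Fin N → ℝ) (K1 K2 : ℝ) (hK1 : 0 ≤ K1) (hK2 : 0 ≤ K2)
    (A : Fin N → Fin N → ℝ) (B : Fin N → Fin N → Fin N → ℝ)
    (hA01 : ∀ i j, A i j = 0 ∨ A i j = 1)
    (hAsymm : ∀ i j, A i j = A j i)
    (hAdiag : ∀ i, A i i = 0)
    (hB01 : ∀ i j k, B i j k = 0 ∨ B i j k = 1)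
    (hBperm : ∀ i j k, B i j k = B j i k ∧ B i j k = B i k j)
    (hBdist : ∀ i j k, (i = j ∨ j = k ∨ i = k) → B i j k = 0)
    (H : (Fin N → ℝ) → (Fin N → ℝ) → ℝ)
    (hH : ∀ I θ, H I θ =
      (∑ i, ω i * I i)
      - K1 / (N : ℝ) * ∑ i, ∑ j, A i j * Real.sqrt (I i * I j) * (I j - I i)
          * Real.sin (θ j - θ i)
      - K2 / (N : ℝ) ^ 2 * ∑ i, ∑ j, ∑ k, B i j k * (I i * I j * I k) ^ ((1 : ℝ) / 3)
          * (I j + I k - 2 * I i) * Real.sin (θ j + θ k - 2 * θ i))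
    (c : ℝ) (hc : 0 < c) (θ : Fin N → ℝ) (i : Fin N) :
    HasDerivAt (fun t => H (fun _ => c) (Function.update θ i t)) 0 (θ i) := by
  have h : (fun t => H (fun _ => c) (Function.update θ i t)) = fun _ => ∑ j, ω j * c := by
    funext t
    rw [hH]
    have hz : c + c - 2 * c = 0 := by ring
    simp [hz]
  rw [h]
  exact hasDerivAt_const _ _
end

section
/- For the Hamiltonian H(I,θ) = Σ_i ω_i I_i − (K_1/N) Σ_{i,j} A_{ij} √(I_i I_j)(I_j − I_i) sin(θ_j − θ_i) − (K_2/N²) Σ_{i,j,k} B_{ijk} (I_i I_j I_k)^{1/3}(I_j + I_k − 2I_i) sin(θ_j + θ_k − 2θ_i), setting I_i = 1/2 for all i, the angle dynamics θ̇_i = ∂H/∂I_i evaluated at I = (1/2,…,1/2) equals ω_i + (K_1/N) Σ_j A_{ij} sin(θ_j − θ_i) + (K_2/N²) Σ_{j,k} B_{ijk} [sin(θ_j + θ_k − 2θ_i) + sin(2θ_j − θ_k − θ_i)]. -/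
lemma rpow18 : ((1/2 : ℝ) * (1/2) * (1/2)) ^ ((1:ℝ)/3) = 1/2 := by
  rw [show ((1/2:ℝ) * (1/2) * (1/2)) = (1/2)^(3:ℕ) by norm_num,
    ← Real.rpow_natCast (1/2:ℝ) 3, ← Real.rpow_mul (by norm_num)]
  norm_num

lemma my_pull {α : Type*} [Fintype α] (p : Prop) [Decidable p] (f : α → ℝ) :
    (∑ x, if p then f x else 0) = if p then ∑ x, f x else 0 := by
  split_ifs <;> simp

lemma pair_deriv {N : ℕ} (a b i : Fin N) (Aab s : ℝ) (hA0 : a = i → b = i → Aab = 0) :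
    HasDerivAt (fun t : ℝ => Aab * Real.sqrt ((if a = i then t else 1/2) * (if b = i then t else 1/2))
        * ((if b = i then t else 1/2) - (if a = i then t else 1/2)) * s)
      (Aab * ((if b = i then (1/2:ℝ) else 0) - (if a = i then (1/2:ℝ) else 0)) * s) (1/2) := by
  by_cases ha : a = i <;> by_cases hb : b = i <;> simp only [if_pos, if_neg, ha, hb, if_true, if_false]
  · rw [hA0 ha hb]
    simpa using hasDerivAt_const (1/2 : ℝ) 0
  · have hs : HasDerivAt (fun t : ℝ => Real.sqrt (t * (1/2)))
        (((1:ℝ)*(1/2)) / (2 * Real.sqrt ((1/2:ℝ) * (1/2)))) (1/2) :=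
      ((hasDerivAt_id (1/2:ℝ)).mul_const (1/2)).sqrt (by norm_num)
    have hg : HasDerivAt (fun t : ℝ => (1/2 : ℝ) - t) (-1) (1/2) := by
      simpa using (hasDerivAt_id (1/2:ℝ)).const_sub ((1:ℝ)/2)
    have := ((hs.const_mul Aab).mul hg).mul_const s
    convert this using 1
    · rfl
    · rfl
    · rfl
    rw [show Real.sqrt ((1/2:ℝ)*(1/2)) = 1/2 by
      rw [show ((1/2:ℝ)*(1/2)) = (1/2)^2 by ring, Real.sqrt_sq (by norm_num)]]
    ring
  · have hs : HasDerivAt (fun t : ℝ => Real.sqrt ((1/2) * t))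
        (((1/2:ℝ)*1) / (2 * Real.sqrt ((1/2:ℝ) * (1/2)))) (1/2) :=
      ((hasDerivAt_id (1/2:ℝ)).const_mul (1/2)).sqrt (by norm_num)
    have hg : HasDerivAt (fun t : ℝ => t - (1/2 : ℝ)) 1 (1/2) := by
      simpa using (hasDerivAt_id (1/2:ℝ)).sub_const ((1:ℝ)/2)
    have := ((hs.const_mul Aab).mul hg).mul_const s
    convert this using 1
    · rfl
    · rfl
    · rfl
    rw [show Real.sqrt ((1/2:ℝ)*(1/2)) = 1/2 by
      rw [show ((1/2:ℝ)*(1/2)) = (1/2)^2 by ring, Real.sqrt_sq (by norm_num)]]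
    ring
  · simpa using hasDerivAt_const (1/2 : ℝ) (Aab * Real.sqrt ((1/2:ℝ)*(1/2)) * ((1/2:ℝ)-(1/2)) * s)

lemma triple_deriv {N : ℕ} (a b c i : Fin N) (Babc s : ℝ)
    (h0 : (a = i ∧ b = i) ∨ (a = i ∧ c = i) ∨ (b = i ∧ c = i) → Babc = 0) :
    HasDerivAt (fun t : ℝ => Babc *
        ((if a = i then t else 1/2) * (if b = i then t else 1/2) * (if c = i then t else 1/2)) ^ ((1:ℝ)/3)
        * ((if b = i then t else 1/2) + (if c = i then t else 1/2) - 2 * (if a = i then t else 1/2)) * s)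
      (Babc * ((if b = i then (1:ℝ) else 0) + (if c = i then (1:ℝ) else 0)
        - 2 * (if a = i then (1:ℝ) else 0)) * (1/2) * s) (1/2) := by
  by_cases ha : a = i <;> by_cases hb : b = i <;> by_cases hc : c = i <;>
    simp only [ha, hb, hc, if_true, if_false]
  · rw [h0 (Or.inl ⟨ha, hb⟩)]; simpa using hasDerivAt_const (1/2 : ℝ) 0
  · rw [h0 (Or.inl ⟨ha, hb⟩)]; simpa using hasDerivAt_const (1/2 : ℝ) 0
  · rw [h0 (Or.inr (Or.inl ⟨ha, hc⟩))]; simpa using hasDerivAt_const (1/2 : ℝ) 0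
  · have hr : HasDerivAt (fun t : ℝ => (t * (1/2) * (1/2)) ^ ((1:ℝ)/3))
        ((1*(1/2)*(1/2)) * ((1:ℝ)/3) * ((1/2:ℝ) * (1/2) * (1/2)) ^ ((1:ℝ)/3 - 1)) (1/2) :=
      (((hasDerivAt_id (1/2:ℝ)).mul_const (1/2)).mul_const (1/2)).rpow_const (Or.inl (by norm_num))
    have hg : HasDerivAt (fun t : ℝ => (1/2 : ℝ) + 1/2 - 2 * t) (-2) (1/2) := by
      simpa using (((hasDerivAt_id (1/2:ℝ)).const_mul (2:ℝ)).const_sub ((1:ℝ)/2 + 1/2))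
    have := ((hr.const_mul Babc).mul hg).mul_const s
    convert this using 1
    · rfl
    · rfl
    · rfl
    rw [rpow18]; ring
  · rw [h0 (Or.inr (Or.inr ⟨hb, hc⟩))]; simpa using hasDerivAt_const (1/2 : ℝ) 0
  · have hr : HasDerivAt (fun t : ℝ => ((1/2) * t * (1/2)) ^ ((1:ℝ)/3))
        (((1/2)*1*(1/2)) * ((1:ℝ)/3) * ((1/2:ℝ) * (1/2) * (1/2)) ^ ((1:ℝ)/3 - 1)) (1/2) := by
      have h := (((hasDerivAt_id (1/2:ℝ)).const_mul ((1:ℝ)/2)).mul_const (1/2)).rpow_const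
        (p := (1:ℝ)/3) (Or.inl (by norm_num))
      convert h using 2 <;> rfl
    have hg : HasDerivAt (fun t : ℝ => t + (1/2:ℝ) - 2 * (1/2)) 1 (1/2) := by
      simpa using ((hasDerivAt_id (1/2:ℝ)).add_const ((1:ℝ)/2)).sub_const (2 * (1/2))
    have := ((hr.const_mul Babc).mul hg).mul_const s
    convert this using 1
    · rfl
    · rfl
    · rfl
    rw [rpow18]; ring
  · have hr : HasDerivAt (fun t : ℝ => ((1/2) * (1/2) * t) ^ ((1:ℝ)/3))
        (((1/2)*(1/2)*1) * ((1:ℝ)/3) * ((1/2:ℝ) * (1/2) * (1/2)) ^ ((1:ℝ)/3 - 1)) (1/2) := by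
      have h := ((hasDerivAt_id (1/2:ℝ)).const_mul ((1:ℝ)/2 * (1/2))).rpow_const
        (p := (1:ℝ)/3) (Or.inl (by norm_num))
      convert h using 2 <;> rfl
    have hg : HasDerivAt (fun t : ℝ => (1/2:ℝ) + t - 2 * (1/2)) 1 (1/2) := by
      simpa using ((hasDerivAt_id (1/2:ℝ)).const_add ((1:ℝ)/2)).sub_const (2 * (1/2))
    have := ((hr.const_mul Babc).mul hg).mul_const s
    convert this using 1
    · rfl
    · rfl
    · rfl
    rw [rpow18]; ring
  · simpa using hasDerivAt_const (1/2 : ℝ)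
      (Babc * (((1:ℝ)/2) * (1/2) * (1/2)) ^ ((1:ℝ)/3) * ((1/2:ℝ) + 1/2 - 2 * (1/2)) * s)

lemma sum2_id {N : ℕ} (A : Fin N → Fin N → ℝ) (θ : Fin N → ℝ) (i : Fin N)
    (hAsymm : ∀ i j, A i j = A j i) :
    (∑ a, ∑ b, A a b * ((if b = i then (1/2:ℝ) else 0) - (if a = i then (1/2:ℝ) else 0))
      * Real.sin (θ b - θ a))
    = -∑ j, A i j * Real.sin (θ j - θ i) := by
  have step1 : ∀ a b : Fin N,
      A a b * ((if b = i then (1/2:ℝ) else 0) - (if a = i then (1/2:ℝ) else 0)) * Real.sin (θ b - θ a)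
      = (if b = i then A a b * (1/2) * Real.sin (θ b - θ a) else 0)
        - (if a = i then A a b * (1/2) * Real.sin (θ b - θ a) else 0) := by
    intro a b; split_ifs <;> ring
  simp only [step1, Finset.sum_sub_distrib]
  rw [Finset.sum_comm (f := fun a b => if a = i then A a b * (1/2) * Real.sin (θ b - θ a) else 0)]
  simp only [Finset.sum_ite_eq', Finset.mem_univ, if_true]
  rw [← Finset.sum_neg_distrib, ← Finset.sum_sub_distrib]
  apply Finset.sum_congr rfl
  intro j _
  rw [hAsymm j i, show θ i - θ j = -(θ j - θ i) by ring, Real.sin_neg]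
  ring

lemma sum3_id {N : ℕ} (B : Fin N → Fin N → Fin N → ℝ) (θ : Fin N → ℝ) (i : Fin N)
    (hBperm : ∀ i j k, B i j k = B j i k ∧ B i j k = B i k j) :
    (∑ a, ∑ b, ∑ c, B a b c * ((if b = i then (1:ℝ) else 0) + (if c = i then (1:ℝ) else 0)
        - 2 * (if a = i then (1:ℝ) else 0)) * (1/2) * Real.sin (θ b + θ c - 2 * θ a))
    = -∑ j, ∑ k, B i j k *
        (Real.sin (θ j + θ k - 2 * θ i) + Real.sin (2 * θ j - θ k - θ i)) := by
  have step1 : ∀ a b c : Fin N,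
      B a b c * ((if b = i then (1:ℝ) else 0) + (if c = i then (1:ℝ) else 0)
        - 2 * (if a = i then (1:ℝ) else 0)) * (1/2) * Real.sin (θ b + θ c - 2 * θ a)
      = (if b = i then B a b c * (1/2) * Real.sin (θ b + θ c - 2 * θ a) else 0)
        + (if c = i then B a b c * (1/2) * Real.sin (θ b + θ c - 2 * θ a) else 0)
        - (if a = i then B a b c * Real.sin (θ b + θ c - 2 * θ a) else 0) := by
    intro a b c; split_ifs <;> ring
  simp only [step1, Finset.sum_sub_distrib, Finset.sum_add_distrib, my_pull,
    Finset.sum_ite_eq', Finset.mem_univ, if_true]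
  have e1 : (∑ a, ∑ c, B a i c * (1/2) * Real.sin (θ i + θ c - 2 * θ a))
      = -(1/2) * ∑ j, ∑ k, B i j k * Real.sin (2 * θ j - θ k - θ i) := by
    rw [Finset.mul_sum]
    refine Finset.sum_congr rfl fun j _ => ?_
    rw [Finset.mul_sum]
    refine Finset.sum_congr rfl fun k _ => ?_
    rw [(hBperm j i k).1, show θ i + θ k - 2 * θ j = -(2 * θ j - θ k - θ i) by ring,
      Real.sin_neg]
    ring
  have e2 : (∑ a, ∑ b, B a b i * (1/2) * Real.sin (θ b + θ i - 2 * θ a))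
      = -(1/2) * ∑ j, ∑ k, B i j k * Real.sin (2 * θ j - θ k - θ i) := by
    rw [Finset.mul_sum]
    refine Finset.sum_congr rfl fun j _ => ?_
    rw [Finset.mul_sum]
    refine Finset.sum_congr rfl fun k _ => ?_
    rw [(hBperm j k i).2, (hBperm j i k).1,
      show θ k + θ i - 2 * θ j = -(2 * θ j - θ k - θ i) by ring, Real.sin_neg]
    ring
  rw [e1, e2]
  simp only [mul_add, Finset.sum_add_distrib, neg_add]
  ring

/-- On the invariant torus `I ≡ 1/2`, the angle dynamics `θ̇_i = ∂H/∂I_i` of the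
higher-order Hamiltonian reproduces the higher-order Kuramoto model. -/
theorem torus_restriction_is_HOKM
    (N : ℕ) (hN : 1 ≤ N) (ω : Fin N → ℝ) (K1 K2 : ℝ) (hK1 : 0 ≤ K1) (hK2 : 0 ≤ K2)
    (A : Fin N → Fin N → ℝ) (B : Fin N → Fin N → Fin N → ℝ)
    (hA01 : ∀ i j, A i j = 0 ∨ A i j = 1)
    (hAsymm : ∀ i j, A i j = A j i)
    (hAdiag : ∀ i, A i i = 0)
    (hB01 : ∀ i j k, B i j k = 0 ∨ B i j k = 1)
    (hBperm : ∀ i j k, B i j k = B j i k ∧ B i j k = B i k j)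
    (hBdist : ∀ i j k, (i = j ∨ j = k ∨ i = k) → B i j k = 0)
    (H : (Fin N → ℝ) → (Fin N → ℝ) → ℝ)
    (hH : ∀ I θ, H I θ =
      (∑ i, ω i * I i)
      - K1 / (N : ℝ) * ∑ i, ∑ j, A i j * Real.sqrt (I i * I j) * (I j - I i)
          * Real.sin (θ j - θ i)
      - K2 / (N : ℝ) ^ 2 * ∑ i, ∑ j, ∑ k, B i j k * (I i * I j * I k) ^ ((1 : ℝ) / 3)
          * (I j + I k - 2 * I i) * Real.sin (θ j + θ k - 2 * θ i))
    (θ : Fin N → ℝ) (i : Fin N) :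
    HasDerivAt (fun t => H (Function.update (fun _ : Fin N => (1 / 2 : ℝ)) i t) θ)
      (ω i
        + K1 / (N : ℝ) * ∑ j, A i j * Real.sin (θ j - θ i)
        + K2 / (N : ℝ) ^ 2 * ∑ j, ∑ k, B i j k *
            (Real.sin (θ j + θ k - 2 * θ i) + Real.sin (2 * θ j - θ k - θ i)))
      (1 / 2) := by
  have hfun : (fun t => H (Function.update (fun _ : Fin N => (1 / 2 : ℝ)) i t) θ)
      = fun t =>
        (∑ j, ω j * (if j = i then t else 1/2))
        - K1 / (N : ℝ) * ∑ a, ∑ b, A a b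
            * Real.sqrt ((if a = i then t else 1/2) * (if b = i then t else 1/2))
            * ((if b = i then t else 1/2) - (if a = i then t else 1/2)) * Real.sin (θ b - θ a)
        - K2 / (N : ℝ) ^ 2 * ∑ a, ∑ b, ∑ c, B a b c
            * ((if a = i then t else 1/2) * (if b = i then t else 1/2)
                * (if c = i then t else 1/2)) ^ ((1 : ℝ) / 3)
            * ((if b = i then t else 1/2) + (if c = i then t else 1/2)
                - 2 * (if a = i then t else 1/2)) * Real.sin (θ b + θ c - 2 * θ a) := by
    funext t
    rw [hH]
    simp only [Function.update_apply]
  rw [hfun]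
  have h1 : HasDerivAt (fun t : ℝ => ∑ j, ω j * (if j = i then t else 1/2)) (ω i) (1/2) := by
    have hj : ∀ j : Fin N, HasDerivAt (fun t : ℝ => ω j * (if j = i then t else 1/2))
        (if j = i then ω j else 0) (1/2) := by
      intro j
      by_cases h : j = i
      · subst h
        simp only [if_pos rfl]
        simpa using (hasDerivAt_id (1/2 : ℝ)).const_mul (ω j)
      · simp only [h, if_false]
        exact hasDerivAt_const _ _
    have := HasDerivAt.fun_sum (fun j (_ : j ∈ Finset.univ) => hj j)
    simpa [Finset.sum_ite_eq'] using this
  have h2 : HasDerivAt (fun t : ℝ => ∑ a, ∑ b, A a b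
        * Real.sqrt ((if a = i then t else 1/2) * (if b = i then t else 1/2))
        * ((if b = i then t else 1/2) - (if a = i then t else 1/2)) * Real.sin (θ b - θ a))
      (∑ a, ∑ b, A a b * ((if b = i then (1/2:ℝ) else 0) - (if a = i then (1/2:ℝ) else 0))
        * Real.sin (θ b - θ a)) (1/2) :=
    HasDerivAt.fun_sum (fun a _ => HasDerivAt.fun_sum (fun b _ =>
      pair_deriv a b i (A a b) (Real.sin (θ b - θ a))
        (fun hai hbi => by rw [hai, hbi]; exact hAdiag i)))
  have h3 : HasDerivAt (fun t : ℝ => ∑ a, ∑ b, ∑ c, B a b c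
        * ((if a = i then t else 1/2) * (if b = i then t else 1/2)
            * (if c = i then t else 1/2)) ^ ((1 : ℝ) / 3)
        * ((if b = i then t else 1/2) + (if c = i then t else 1/2)
            - 2 * (if a = i then t else 1/2)) * Real.sin (θ b + θ c - 2 * θ a))
      (∑ a, ∑ b, ∑ c, B a b c * ((if b = i then (1:ℝ) else 0) + (if c = i then (1:ℝ) else 0)
        - 2 * (if a = i then (1:ℝ) else 0)) * (1/2) * Real.sin (θ b + θ c - 2 * θ a)) (1/2) :=
    HasDerivAt.fun_sum (fun a _ => HasDerivAt.fun_sum (fun b _ => HasDerivAt.fun_sum (fun c _ =>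
      triple_deriv a b c i (B a b c) (Real.sin (θ b + θ c - 2 * θ a))
        (fun h => by
          rcases h with ⟨ha, hb⟩ | ⟨ha, hc⟩ | ⟨hb, hc⟩
          · exact hBdist a b c (Or.inl (ha.trans hb.symm))
          · exact hBdist a b c (Or.inr (Or.inr (ha.trans hc.symm)))
          · exact hBdist a b c (Or.inr (Or.inl (hb.trans hc.symm)))))))
  have hD := (h1.sub (h2.const_mul (K1 / (N : ℝ)))).sub (h3.const_mul (K2 / (N : ℝ) ^ 2))
  have hval : (ω i
        + K1 / (N : ℝ) * ∑ j, A i j * Real.sin (θ j - θ i)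
        + K2 / (N : ℝ) ^ 2 * ∑ j, ∑ k, B i j k *
            (Real.sin (θ j + θ k - 2 * θ i) + Real.sin (2 * θ j - θ k - θ i)))
      = ω i - K1 / (N : ℝ) * (∑ a, ∑ b, A a b
            * ((if b = i then (1/2:ℝ) else 0) - (if a = i then (1/2:ℝ) else 0))
            * Real.sin (θ b - θ a))
        - K2 / (N : ℝ) ^ 2 * (∑ a, ∑ b, ∑ c, B a b c
            * ((if b = i then (1:ℝ) else 0) + (if c = i then (1:ℝ) else 0)
              - 2 * (if a = i then (1:ℝ) else 0)) * (1/2) * Real.sin (θ b + θ c - 2 * θ a)) := by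
    rw [sum2_id A θ i hAsymm, sum3_id B θ i hBperm]
    ring
  rw [hval]
  exact hD
end

section
/- For the pairwise Hamiltonian H(I,θ) = Σ_i ω_i I_i − (K_1/N) Σ_{i,j} A_{ij} √(I_i I_j)(I_j − I_i) sin(θ_j − θ_i), the restriction of the angle dynamics θ̇_i = ∂H/∂I_i to the invariant torus I_i = c for all i (c > 0) gives θ̇_i = ω_i + (2cK_1/N) Σ_j A_{ij} sin(θ_j − θ_i), i.e., the classical Kuramoto model with rescaled coupling strength 2cK_1. -/
/-- The restriction of the pairwise Hamiltonian angle dynamics to the invariant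
torus `I ≡ c` gives the classical Kuramoto model with rescaled coupling strength `2cK₁`. -/
theorem pairwise_torus_restriction_is_Kuramoto
    (N : ℕ) (hN : 1 ≤ N) (ω : Fin N → ℝ) (K1 : ℝ) (hK1 : 0 ≤ K1)
    (A : Fin N → Fin N → ℝ)
    (hA01 : ∀ i j, A i j = 0 ∨ A i j = 1)
    (hAsymm : ∀ i j, A i j = A j i)
    (hAdiag : ∀ i, A i i = 0)
    (H : (Fin N → ℝ) → (Fin N → ℝ) → ℝ)
    (hH : ∀ I θ, H I θ =
      (∑ i, ω i * I i)
      - K1 / (N : ℝ) * ∑ i, ∑ j, A i j * Real.sqrt (I i * I j) * (I j - I i)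
          * Real.sin (θ j - θ i))
    (c : ℝ) (hc : 0 < c) (θ : Fin N → ℝ) (i : Fin N) :
    HasDerivAt (fun t => H (Function.update (fun _ : Fin N => c) i t) θ)
      (ω i + 2 * c * K1 / (N : ℝ) * ∑ j, A i j * Real.sin (θ j - θ i)) c := by
  set S := ∑ j, A i j * Real.sin (θ j - θ i) with hS
  have key : ∀ t : ℝ,
      H (Function.update (fun _ : Fin N => c) i t) θ
      = (ω i * t + ∑ k ∈ Finset.univ.erase i, ω k * c)
        - K1 / (N : ℝ) * (2 * (Real.sqrt (t * c) * (c - t)) * S) := by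
    intro t
    rw [hH]
    set u := Function.update (fun _ : Fin N => c) i t with hu
    have hui : u i = t := by simp [hu]
    have huj : ∀ j, j ≠ i → u j = c := by
      intro j hj; simp [hu, Function.update_of_ne, hj]
    congr 1
    · rw [← Finset.add_sum_erase _ _ (Finset.mem_univ i), hui]
      congr 1
      exact Finset.sum_congr rfl fun k hk => by rw [huj k (Finset.ne_of_mem_erase hk)]
    · congr 1
      have hpt : ∀ k j : Fin N,
          A k j * Real.sqrt (u k * u j) * (u j - u k) * Real.sin (θ j - θ k)
          = (if k = i then A i j * Real.sin (θ j - θ i) else 0)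
              * (Real.sqrt (t * c) * (c - t))
            + (if j = i then A i k * Real.sin (θ k - θ i) else 0)
              * (Real.sqrt (t * c) * (c - t)) := by
        intro k j
        by_cases hk : k = i <;> by_cases hj : j = i
        · rw [hk, hj]; simp [hAdiag]
        · rw [hk, hui, huj j hj, if_pos rfl, if_neg hj]; ring
        · have hsin : Real.sin (θ i - θ k) = - Real.sin (θ k - θ i) := by
            rw [← Real.sin_neg, neg_sub]
          rw [hj, hui, huj k hk, if_neg hk, if_pos rfl, hAsymm k i,
            mul_comm c t, hsin]
          ring
        · rw [huj j hj, huj k hk, if_neg hk, if_neg hj]; ring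
      calc ∑ k, ∑ j, A k j * Real.sqrt (u k * u j) * (u j - u k) * Real.sin (θ j - θ k)
          = ∑ k, ∑ j, ((if k = i then A i j * Real.sin (θ j - θ i) else 0)
              * (Real.sqrt (t * c) * (c - t))
            + (if j = i then A i k * Real.sin (θ k - θ i) else 0)
              * (Real.sqrt (t * c) * (c - t))) := by
            exact Finset.sum_congr rfl fun k _ => Finset.sum_congr rfl fun j _ => hpt k j
        _ = 2 * (Real.sqrt (t * c) * (c - t)) * S := by
            simp only [Finset.sum_add_distrib]
            rw [Finset.sum_comm (f := fun k j =>
              (if k = i then A i j * Real.sin (θ j - θ i) else 0)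
                * (Real.sqrt (t * c) * (c - t)))]
            simp only [ite_mul, zero_mul, Finset.sum_ite_eq', Finset.mem_univ,
              if_pos, ← Finset.sum_mul, hS]
            ring
  have hfun : (fun t => H (Function.update (fun _ : Fin N => c) i t) θ)
      = fun t => (ω i * t + ∑ k ∈ Finset.univ.erase i, ω k * c)
        - K1 / (N : ℝ) * (2 * (Real.sqrt (t * c) * (c - t)) * S) := funext key
  rw [hfun]
  have hsqrt : HasDerivAt (fun t : ℝ => Real.sqrt (t * c)) (1 / 2) c := by
    have h1 : HasDerivAt (fun t : ℝ => t * c) (1 * c) c :=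
      (hasDerivAt_id c).mul_const c
    have := h1.sqrt (by positivity)
    convert this using 1
    rw [Real.sqrt_mul_self hc.le]
    field_simp
  have hlin : HasDerivAt (fun t : ℝ => c - t) (-1) c := by
    simpa using (hasDerivAt_id c).const_sub c
  have hprod : HasDerivAt (fun t : ℝ => Real.sqrt (t * c) * (c - t)) (-c) c := by
    have : HasDerivAt (fun t : ℝ => Real.sqrt (t * c) * (c - t)) _ c := hsqrt.mul hlin
    convert this using 1
    rw [Real.sqrt_mul_self hc.le]
    ring
  have h1 : HasDerivAt (fun t : ℝ => ω i * t + ∑ k ∈ Finset.univ.erase i, ω k * c)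
      (ω i) c := by
    simpa using ((hasDerivAt_id c).const_mul (ω i)).add_const (∑ k ∈ Finset.univ.erase i, ω k * c)
  have h2 : HasDerivAt (fun t : ℝ => K1 / (N : ℝ) * (2 * (Real.sqrt (t * c) * (c - t)) * S))
      (K1 / (N : ℝ) * (2 * (-c) * S)) c := by
    exact ((hprod.const_mul (2 : ℝ)).mul_const S).const_mul (K1 / (N : ℝ))
  have : HasDerivAt (fun t : ℝ => (ω i * t + ∑ k ∈ Finset.univ.erase i, ω k * c)
      - K1 / (N : ℝ) * (2 * (Real.sqrt (t * c) * (c - t)) * S)) _ c := h1.sub h2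
  convert this using 1
  ring
end
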